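/- Trace vs. Bures distance infinitesimally: Let σ ∈ S_d be a density matrix of full rank with smallest eigenvalue λ_min(σ) > 0. Then there exists ε > 0 (depending on σ) such that for every density matrix ρ ∈ S_d with d_tr(ρ,σ) ≤ ε one has d_B(ρ,σ) ≤ d_tr(ρ,σ)/√(λ_min(σ)). -/

import Mathlib

open scoped Matrix ComplexOrder
open Matrix

section Defs

variable {m : Type*}

/-- The trace norm `‖X‖₁ = tr √(XᴴX)`. -/
noncomputable def traceNorm [Fintype m] [DecidableEq m] (X : Matrix m m ℂ) : ℝ :=
  (((Matrix.posSemidef_conjTranspose_mul_self X).1.eigenvectorUnitary : Matrix m m ℂ) *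
    diagonal (((↑) : ℝ → ℂ) ∘ Real.sqrt ∘ (Matrix.posSemidef_conjTranspose_mul_self X).1.eigenvalues) *
    (star ((Matrix.posSemidef_conjTranspose_mul_self X).1.eigenvectorUnitary : Matrix m m ℂ))).trace.re

/-- The trace distance `d_tr(ρ,σ) = ‖ρ - σ‖₁ / 2`. -/
noncomputable def trDist [Fintype m] [DecidableEq m] (ρ σ : Matrix m m ℂ) : ℝ :=
  traceNorm (ρ - σ) / 2

/-- A density matrix: positive semidefinite (hence Hermitian) with unit trace. -/
def IsDensityMatrix [Fintype m] (ρ : Matrix m m ℂ) : Prop :=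
  ρ.PosSemidef ∧ ρ.trace = 1

/-- Apply a superoperator, given by its matrix representation
(rows/columns indexed by matrix entry positions), to a matrix. -/
noncomputable def appS [Fintype m] (S : Matrix (m × m) (m × m) ℂ) (ρ : Matrix m m ℂ) :
    Matrix m m ℂ :=
  Matrix.of fun i j => ∑ p : m × m, S (i, j) p * ρ p.1 p.2

/-- The Choi matrix of a superoperator. -/
def choiMatrix [Fintype m] (S : Matrix (m × m) (m × m) ℂ) : Matrix (m × m) (m × m) ℂ :=
  Matrix.of fun p q => S (p.2, q.2) (p.1, q.1)

/-- Quantum channel: completely positive (positive semidefinite Choi matrix)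
and trace preserving. -/
def IsQChannelM [Fintype m] (S : Matrix (m × m) (m × m) ℂ) : Prop :=
  (choiMatrix S).PosSemidef ∧ ∀ X : Matrix m m ℂ, (appS S X).trace = X.trace

/-- `expS t L` is the superoperator `e^{tL}`. -/
noncomputable def expS [Fintype m] [DecidableEq m] (t : ℝ) (L : Matrix (m × m) (m × m) ℂ) :
    Matrix (m × m) (m × m) ℂ :=
  NormedSpace.exp ((t : ℂ) • L)

/-- A Liouvillian: `e^{tL}` is a quantum channel for every `t ≥ 0`. -/
def IsLiouvillianM [Fintype m] [DecidableEq m] (L : Matrix (m × m) (m × m) ℂ) : Prop :=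
  ∀ t : ℝ, 0 ≤ t → IsQChannelM (expS t L)

/-- `lam` is the spectral gap of the Liouvillian `L`:
`lam = inf {|Re μ| : μ eigenvalue of L, Re μ < 0}` (and such an eigenvalue exists). -/
def IsGapOf [Fintype m] [DecidableEq m] (L : Matrix (m × m) (m × m) ℂ) (lam : ℝ) : Prop :=
  (∃ μ ∈ spectrum ℂ L, μ.re < 0) ∧
  lam = sInf {r : ℝ | ∃ μ ∈ spectrum ℂ L, μ.re < 0 ∧ r = -μ.re}

/-- `Tφ` is the peripheral evolution `T_{φ,t} = Σ_{k : Re λ_k = 0} e^{tλ_k} P_k` of the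
semigroup generated by `L`: it acts as `e^{tμ}` on each generalized eigenspace of `L` with
`Re μ = 0`, and as `0` on each generalized eigenspace with `Re μ < 0`. -/
def IsPeriphEvolAt [Fintype m] (L : Matrix (m × m) (m × m) ℂ) (t : ℝ)
    (Tφ : Matrix (m × m) (m × m) ℂ) : Prop :=
  (∀ μ : ℂ, μ.re = 0 → ∀ v ∈ Module.End.maxGenEigenspace (Matrix.mulVecLin L) μ,
      Tφ.mulVec v = Complex.exp (t * μ) • v) ∧
  (∀ μ : ℂ, μ.re < 0 → ∀ v ∈ Module.End.maxGenEigenspace (Matrix.mulVecLin L) μ,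
      Tφ.mulVec v = 0)

/-- `Tφ` is the peripheral projection `T_φ = Σ_{k : |μ_k| = 1} μ_k P_k` of the channel `T`:
it acts as `μ •` on each generalized eigenspace of `T` with `|μ| = 1`, and as `0` on each
generalized eigenspace with `|μ| < 1`. -/
def IsPeriphProjM [Fintype m] (T Tφ : Matrix (m × m) (m × m) ℂ) : Prop :=
  (∀ μ : ℂ, ‖μ‖ = 1 → ∀ v ∈ Module.End.maxGenEigenspace (Matrix.mulVecLin T) μ,
      Tφ.mulVec v = μ • v) ∧
  (∀ μ : ℂ, ‖μ‖ < 1 → ∀ v ∈ Module.End.maxGenEigenspace (Matrix.mulVecLin T) μ,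
      Tφ.mulVec v = 0)

/-- The trace-norm contraction `η_tr[T] = sup_ρ d_tr(T(ρ), Tφ(ρ))` over density matrices. -/
noncomputable def etaTR [Fintype m] [DecidableEq m] (T Tφ : Matrix (m × m) (m × m) ℂ) : ℝ :=
  ⨆ ρ : {ρ : Matrix m m ℂ // IsDensityMatrix ρ}, trDist (appS T ρ.1) (appS Tφ ρ.1)

open scoped Classical in
/-- Matrix square root of a positive semidefinite matrix (junk value `0` otherwise). -/
noncomputable def msqrt [Fintype m] [DecidableEq m] (A : Matrix m m ℂ) : Matrix m m ℂ :=
  if h : A.PosSemidef then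
    (h.1.eigenvectorUnitary : Matrix m m ℂ) * diagonal (((↑) : ℝ → ℂ) ∘ Real.sqrt ∘ h.1.eigenvalues) *
      (star (h.1.eigenvectorUnitary : Matrix m m ℂ)) else 0

/-- The fidelity `F(ρ,σ) = tr √(√ρ σ √ρ)`. -/
noncomputable def fidelity [Fintype m] [DecidableEq m] (ρ σ : Matrix m m ℂ) : ℝ :=
  ((msqrt (msqrt ρ * σ * msqrt ρ)).trace).re

/-- The Bures distance `d_B(ρ,σ) = √(1 - F(ρ,σ))`. -/
noncomputable def buresDist [Fintype m] [DecidableEq m] (ρ σ : Matrix m m ℂ) : ℝ :=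
  Real.sqrt (1 - fidelity ρ σ)

/-- The Frobenius (Hilbert-Schmidt) norm `‖X‖₂ = √(tr XᴴX)`. -/
noncomputable def frobNorm [Fintype m] (X : Matrix m m ℂ) : ℝ :=
  Real.sqrt ((Xᴴ * X).trace.re)

/-- The operator (spectral) norm `‖A‖_∞`. -/
noncomputable def specNorm [Fintype m] [DecidableEq m] (A : Matrix m m ℂ) : ℝ :=
  ‖(Matrix.toEuclideanLin A).toContinuousLinearMap‖

/-- The superoperator norm `‖S‖_{2→2} = sup {‖S(X)‖₂ : ‖X‖₂ ≤ 1}` induced by the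
Frobenius norm. -/
noncomputable def superNorm22 [Fintype m] (S : Matrix (m × m) (m × m) ℂ) : ℝ :=
  ⨆ X : {X : Matrix m m ℂ // frobNorm X ≤ 1}, frobNorm (appS S X.1)

/-- The dual (Heisenberg-picture) superoperator `S*`, satisfying
`tr[A S*(B)] = tr[S(A) B]`. -/
def dualS [Fintype m] (S : Matrix (m × m) (m × m) ℂ) : Matrix (m × m) (m × m) ℂ :=
  Matrix.of fun p q => S (q.2, q.1) (p.2, p.1)

/-- Matrix representation of the superoperator `ρ ↦ A ρ B`. -/
def sandwichS [Fintype m] (A B : Matrix m m ℂ) : Matrix (m × m) (m × m) ℂ :=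
  Matrix.of fun p q => A p.1 q.1 * B q.2 p.2

/-- The Lindblad dissipator `ρ ↦ L ρ L† − (1/2)L†L ρ − (1/2)ρ L†L` in matrix
representation. -/
noncomputable def lindbladTermS [Fintype m] [DecidableEq m] (L : Matrix m m ℂ) :
    Matrix (m × m) (m × m) ℂ :=
  sandwichS L Lᴴ - (1 / 2 : ℂ) • sandwichS (Lᴴ * L) 1 - (1 / 2 : ℂ) • sandwichS 1 (Lᴴ * L)

/-- Tensor (Kronecker) product of two superoperators. -/
def kronS {m' : Type*} [Fintype m] [Fintype m'] (S : Matrix (m × m) (m × m) ℂ)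
    (S' : Matrix (m' × m') (m' × m') ℂ) :
    Matrix ((m × m') × (m × m')) ((m × m') × (m × m')) ℂ :=
  Matrix.of fun p q =>
    S (p.1.1, p.2.1) (q.1.1, q.2.1) * S' (p.1.2, p.2.2) (q.1.2, q.2.2)

end Defs

/-- `n`-fold tensor power `S^{⊗n}` of a superoperator on `M_d`. -/
noncomputable def tensorPowS (n : ℕ) {d : ℕ} (S : Matrix (Fin d × Fin d) (Fin d × Fin d) ℂ) :
    Matrix ((Fin n → Fin d) × (Fin n → Fin d)) ((Fin n → Fin d) × (Fin n → Fin d)) ℂ :=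
  Matrix.of fun p q => ∏ i, S (p.1 i, p.2 i) (q.1 i, q.2 i)

/-- `n`-fold tensor power `ρ^{⊗n}` of a matrix. -/
noncomputable def tensorPowM (n : ℕ) {d : ℕ} (ρ : Matrix (Fin d) (Fin d) ℂ) :
    Matrix (Fin n → Fin d) (Fin n → Fin d) ℂ :=
  Matrix.of fun x y => ∏ i, ρ (x i) (y i)

/-- Tensor product `A 0 ⊗ A 1 ⊗ … ⊗ A (n-1)` of a family of matrices. -/
noncomputable def tensorFamilyM {n d : ℕ} (A : Fin n → Matrix (Fin d) (Fin d) ℂ) :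
    Matrix (Fin n → Fin d) (Fin n → Fin d) ℂ :=
  Matrix.of fun x y => ∏ i, A i (x i) (y i)

namespace Matrix.PosSemidef

/-- Square root of a positive semidefinite matrix via its spectral decomposition. -/
noncomputable def sqrt {n : Type*} [Fintype n] [DecidableEq n] {A : Matrix n n ℂ}
    (hA : A.PosSemidef) : Matrix n n ℂ :=
  (hA.1.eigenvectorUnitary : Matrix n n ℂ) * diagonal (((↑) : ℝ → ℂ) ∘ Real.sqrt ∘ hA.1.eigenvalues) *
    (star (hA.1.eigenvectorUnitary : Matrix n n ℂ))

end Matrix.PosSemidef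

namespace BuresAux

variable {n : Type*} [Fintype n] [DecidableEq n]

noncomputable def conjD {H : Matrix n n ℂ} (hH : H.IsHermitian) (g : n → ℝ) : Matrix n n ℂ :=
  (hH.eigenvectorUnitary : Matrix n n ℂ) * diagonal ((↑) ∘ g) *
    star (hH.eigenvectorUnitary : Matrix n n ℂ)

lemma coe_comp_mul (g g' : n → ℝ) :
    (((↑) ∘ g : n → ℂ)) * ((↑) ∘ g') = (↑) ∘ (g * g') := by funext i; simp

lemma coe_comp_sub (g g' : n → ℝ) :
    (((↑) ∘ g : n → ℂ)) - ((↑) ∘ g') = (↑) ∘ (g - g') := by funext i; simp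

lemma conjD_trace {H : Matrix n n ℂ} (hH : H.IsHermitian) (g : n → ℝ) :
    (conjD hH g).trace = ↑(∑ i, g i) := by
  rw [conjD, Matrix.trace_mul_cycle, Unitary.coe_star_mul_self, Matrix.one_mul,
    Matrix.trace_diagonal]
  push_cast
  rfl

lemma conjD_mul {H : Matrix n n ℂ} (hH : H.IsHermitian) (g g' : n → ℝ) :
    conjD hH g * conjD hH g' = conjD hH (g * g') := by
  simp only [conjD, Matrix.mul_assoc]
  rw [← Matrix.mul_assoc (star _) _, Unitary.coe_star_mul_self, Matrix.one_mul,
    ← Matrix.mul_assoc (diagonal _) _, diagonal_mul_diagonal, ← coe_comp_mul]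
  rfl

lemma conjD_posSemidef {H : Matrix n n ℂ} (hH : H.IsHermitian) {g : n → ℝ}
    (hg : ∀ i, 0 ≤ g i) : (conjD hH g).PosSemidef := by
  have h1 : PosSemidef (diagonal ((↑) ∘ g : n → ℂ)) := by
    refine posSemidef_diagonal_iff.mpr fun i => ?_
    simpa using Complex.zero_le_real.mpr (hg i)
  simpa [conjD, Matrix.star_eq_conjTranspose] using
    h1.mul_mul_conjTranspose_same (hH.eigenvectorUnitary : Matrix n n ℂ)

lemma conjD_eigenvalues {H : Matrix n n ℂ} (hH : H.IsHermitian) :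
    conjD hH hH.eigenvalues = H := by
  rw [conjD]
  conv_rhs => rw [hH.spectral_theorem]
  simp [Unitary.conjStarAlgAut_apply]

lemma conjD_sub {H : Matrix n n ℂ} (hH : H.IsHermitian) (g g' : n → ℝ) :
    conjD hH g - conjD hH g' = conjD hH (g - g') := by
  simp only [conjD, ← Matrix.sub_mul, ← Matrix.mul_sub, diagonal_sub, ← coe_comp_sub]
  rfl

lemma conjD_const {H : Matrix n n ℂ} (hH : H.IsHermitian) (c : ℝ) :
    conjD hH (fun _ => c) = (c : ℂ) • 1 := by
  have h : diagonal ((↑) ∘ (fun _ : n => c) : n → ℂ) = (c : ℂ) • 1 := by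
    ext i j
    by_cases hij : i = j <;> simp [Matrix.diagonal_apply, Matrix.one_apply, hij]
  have h2 : (hH.eigenvectorUnitary : Matrix n n ℂ) * star (hH.eigenvectorUnitary : Matrix n n ℂ)
      = 1 := mem_unitaryGroup_iff.mp hH.eigenvectorUnitary.2
  rw [conjD, h, Matrix.mul_smul, Matrix.smul_mul, Matrix.mul_one, h2]

lemma conjD_sqrt {H : Matrix n n ℂ} (hH : PosSemidef H) :
    hH.sqrt = conjD hH.1 (Real.sqrt ∘ hH.1.eigenvalues) := rfl

lemma psd_trace_re_nonneg {M : Matrix n n ℂ} (hM : M.PosSemidef) : 0 ≤ M.trace.re := by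
  have h := conjD_eigenvalues hM.1
  rw [← h, conjD_trace]
  simpa using Finset.sum_nonneg fun i _ => hM.eigenvalues_nonneg i

lemma trace_conjTranspose_mul (M : Matrix n n ℂ) :
    (Mᴴ * M).trace = ↑(∑ p : n × n, ‖M p.1 p.2‖ ^ 2) := by
  rw [Matrix.trace]
  push_cast
  rw [Fintype.sum_prod_type]
  rw [Finset.sum_comm]
  congr 1
  funext j
  rw [Matrix.diag_apply, Matrix.mul_apply]
  congr 1
  funext i
  rw [Matrix.conjTranspose_apply]
  show star (M i j) * M i j = (↑(‖M i j‖) : ℂ) ^ 2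
  rw [← Complex.ofReal_pow, Complex.sq_norm, Complex.normSq_eq_conj_mul_self]
  rfl

lemma cs_dot (u v : n → ℂ) :
    ‖star u ⬝ᵥ v‖ ≤
      Real.sqrt ((star u ⬝ᵥ u).re) * Real.sqrt ((star v ⬝ᵥ v).re) := by
  let x : EuclideanSpace ℂ n := (WithLp.equiv 2 _).symm u
  let y : EuclideanSpace ℂ n := (WithLp.equiv 2 _).symm v
  have hxy : (inner ℂ x y) = star u ⬝ᵥ v := by
    simp [x, y, PiLp.inner_apply, dotProduct, RCLike.inner_apply, Matrix.star_apply,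
      mul_comm, Pi.star_apply, RCLike.star_def]
  have hxx : (inner ℂ x x) = star u ⬝ᵥ u := by
    simp [x, PiLp.inner_apply, dotProduct, RCLike.inner_apply, Pi.star_apply, RCLike.star_def,
      -inner_self_eq_norm_sq_to_K, mul_comm]
  have hyy : (inner ℂ y y) = star v ⬝ᵥ v := by
    simp [y, PiLp.inner_apply, dotProduct, RCLike.inner_apply, Pi.star_apply, RCLike.star_def,
      -inner_self_eq_norm_sq_to_K, mul_comm]
  have h := norm_inner_le_norm (𝕜 := ℂ) x y
  rw [norm_eq_sqrt_re_inner (𝕜 := ℂ) x, norm_eq_sqrt_re_inner (𝕜 := ℂ) y] at h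
  rw [← hxy, ← hxx, ← hyy]
  simpa using h

lemma traceNorm_eq_sum (X : Matrix n n ℂ) :
    traceNorm X
      = ∑ i, Real.sqrt ((Matrix.posSemidef_conjTranspose_mul_self X).1.eigenvalues i) := by
  rw [show traceNorm X = ((Matrix.posSemidef_conjTranspose_mul_self X).sqrt.trace).re from rfl,
    conjD_sqrt, conjD_trace]
  simp

lemma re_trace_le_traceNorm (X : Matrix n n ℂ) : X.trace.re ≤ traceNorm X := by
  set hp := Matrix.posSemidef_conjTranspose_mul_self X with hpdef
  set hH : (Xᴴ * X).IsHermitian := hp.1 with hHdef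
  set U : Matrix n n ℂ := (hH.eigenvectorUnitary : Matrix n n ℂ) with hUdef
  have hU1 : star U * U = 1 := Unitary.coe_star_mul_self hH.eigenvectorUnitary
  have hU2 : U * star U = 1 := Unitary.coe_mul_star_self hH.eigenvectorUnitary
  have hdiag : star U * (Xᴴ * X) * U = diagonal ((↑) ∘ hH.eigenvalues) :=
    by
      have := Matrix.IsHermitian.conjStarAlgAut_star_eigenvectorUnitary hp.1
      simpa [Unitary.conjStarAlgAut_apply] using this
  have htr : X.trace = (star U * X * U).trace := by
    rw [trace_mul_comm (star U * X) U, ← Matrix.mul_assoc, hU2, Matrix.one_mul]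
  have key : ∀ i, ((star U * X * U) i i).re ≤ Real.sqrt (hH.eigenvalues i) := by
    intro i
    set u : n → ℂ := fun j => U j i with hu
    set v : n → ℂ := X *ᵥ u with hv
    have h1 : (star U * X * U) i i = star u ⬝ᵥ v := by
      rw [Matrix.mul_assoc]
      simp [Matrix.mul_apply, Matrix.mulVec, dotProduct, Matrix.star_apply, u, v,
        Finset.mul_sum, mul_assoc]
    have h2 : star u ⬝ᵥ u = 1 := by
      have : (star U * U) i i = star u ⬝ᵥ u := by
        simp [Matrix.mul_apply, dotProduct, Matrix.star_apply, u]
      rw [← this, hU1, Matrix.one_apply_eq]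
    have h3 : star v ⬝ᵥ v = ((hH.eigenvalues i : ℝ) : ℂ) := by
      have e1 : star v ⬝ᵥ v = (star U * (Xᴴ * X) * U) i i := by
        have : star U * (Xᴴ * X) * U = star U * Xᴴ * (X * U) := by
          simp [Matrix.mul_assoc]
        rw [this]
        simp [Matrix.mul_apply, Matrix.mulVec, dotProduct, Matrix.star_apply,
          Matrix.conjTranspose_apply, u, v, Finset.mul_sum, Finset.sum_mul, mul_assoc,
          mul_comm, mul_left_comm]
      rw [e1, hdiag]
      simp
    calc ((star U * X * U) i i).re ≤ ‖(star U * X * U) i i‖ := Complex.re_le_norm _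
      _ ≤ Real.sqrt ((star u ⬝ᵥ u).re) * Real.sqrt ((star v ⬝ᵥ v).re) := by
          rw [h1]; exact cs_dot u v
      _ = Real.sqrt (hH.eigenvalues i) := by
          rw [h2, h3]; simp
  rw [traceNorm_eq_sum, htr, Matrix.trace]
  rw [Complex.re_sum]
  exact Finset.sum_le_sum fun i _ => key i

/-- Cauchy-Schwarz for the Frobenius inner product via entries. -/
lemma re_trace_mul_le_frob (X Δ : Matrix n n ℂ) (hX : Xᴴ = X) :
    ((X * Δ).trace).re ≤
      Real.sqrt ((Xᴴ * X).trace.re) * Real.sqrt ((Δᴴ * Δ).trace.re) := by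
  have hXf : (Xᴴ * X).trace.re = ∑ p : n × n, ‖X p.1 p.2‖ ^ 2 := by
    rw [trace_conjTranspose_mul]; exact Complex.ofReal_re _
  have hΔf : (Δᴴ * Δ).trace.re = ∑ p : n × n, ‖Δ p.1 p.2‖ ^ 2 := by
    rw [trace_conjTranspose_mul]; exact Complex.ofReal_re _
  have htr : (X * Δ).trace = ∑ p : n × n, X p.1 p.2 * Δ p.2 p.1 := by
    rw [Matrix.trace, Fintype.sum_prod_type]
    simp [Matrix.mul_apply]
  have h1 : ((X * Δ).trace).re ≤ ∑ p : n × n, ‖X p.1 p.2‖ * ‖Δ p.2 p.1‖ := by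
    rw [htr, Complex.re_sum]
    refine Finset.sum_le_sum fun p _ => ?_
    calc (X p.1 p.2 * Δ p.2 p.1).re ≤ ‖X p.1 p.2 * Δ p.2 p.1‖ := Complex.re_le_norm _
      _ = ‖X p.1 p.2‖ * ‖Δ p.2 p.1‖ := by rw [norm_mul]
  have h2 := Real.sum_mul_le_sqrt_mul_sqrt Finset.univ
    (fun p : n × n => ‖X p.1 p.2‖) (fun p : n × n => ‖Δ p.2 p.1‖)
  have h3 : ∑ p : n × n, ‖Δ p.2 p.1‖ ^ 2
      = ∑ p : n × n, ‖Δ p.1 p.2‖ ^ 2 :=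
    Fintype.sum_equiv (Equiv.prodComm n n) _ _ (fun p => rfl)
  rw [hXf, hΔf, ← h3]
  exact le_trans h1 h2

lemma sandwich_decomp (X B : Matrix n n ℂ) (hX : Xᴴ = X) (c : ℝ) :
    X * B * X = Xᴴ * (B - (c : ℂ) • 1) * X + (c : ℂ) • (X * X) := by
  rw [hX, Matrix.mul_sub, Matrix.mul_smul, Matrix.mul_one, Matrix.sub_mul, Matrix.smul_mul]
  abel

end BuresAux

namespace Matrix.PosSemidef

open scoped MatrixOrder

variable {n : Type*} [Fintype n] [DecidableEq n]

lemma posSemidef_sqrt {A : Matrix n n ℂ} (hA : A.PosSemidef) : hA.sqrt.PosSemidef :=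
  BuresAux.conjD_posSemidef hA.1 fun i => Real.sqrt_nonneg _

lemma sqrt_mul_self {A : Matrix n n ℂ} (hA : A.PosSemidef) : hA.sqrt * hA.sqrt = A := by
  rw [BuresAux.conjD_sqrt, BuresAux.conjD_mul]
  have h : (Real.sqrt ∘ hA.1.eigenvalues) * (Real.sqrt ∘ hA.1.eigenvalues) = hA.1.eigenvalues := by
    funext i
    exact Real.mul_self_sqrt (hA.eigenvalues_nonneg i)
  rw [h]
  exact BuresAux.conjD_eigenvalues hA.1

lemma eq_sqrt_of_sq_eq {A : Matrix n n ℂ} (hA : A.PosSemidef) {B : Matrix n n ℂ}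
    (hB : B.PosSemidef) (hAB : A ^ 2 = B) : A = hB.sqrt := by
  have h1 : CFC.sqrt B = A := CFC.sqrt_unique (by rw [← hAB, pow_two]) hA.nonneg
  have h2 : CFC.sqrt B = hB.sqrt := CFC.sqrt_unique hB.sqrt_mul_self hB.posSemidef_sqrt.nonneg
  rw [← h1, h2]

end Matrix.PosSemidef


/-- **Trace vs. Bures distance infinitesimally.** -/
theorem bures_le_trace_near_full_rank {d : ℕ}
    (σ : Matrix (Fin d) (Fin d) ℂ) (hσ : IsDensityMatrix σ) (hpd : σ.PosDef)
    (lmin : ℝ) (hlmin : lmin = ⨅ i, hσ.1.1.eigenvalues i) (hlpos : 0 < lmin) :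
    ∃ ε : ℝ, 0 < ε ∧ ∀ ρ : Matrix (Fin d) (Fin d) ℂ, IsDensityMatrix ρ →
      trDist ρ σ ≤ ε → buresDist ρ σ ≤ trDist ρ σ / Real.sqrt lmin := by
  classical
  refine ⟨1, one_pos, fun ρ hρ _ => ?_⟩
  have hρpsd : ρ.PosSemidef := hρ.1
  set A : Matrix (Fin d) (Fin d) ℂ := hρpsd.sqrt with hAdef
  set B : Matrix (Fin d) (Fin d) ℂ := hσ.1.sqrt with hBdef
  have hApsd : A.PosSemidef := hρpsd.posSemidef_sqrt
  have hBpsd : B.PosSemidef := hσ.1.posSemidef_sqrt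
  have hAherm : Aᴴ = A := hApsd.1
  have hBherm : Bᴴ = B := hBpsd.1
  have hAA : A * A = ρ := hρpsd.sqrt_mul_self
  have hBB : B * B = σ := hσ.1.sqrt_mul_self
  set X : Matrix (Fin d) (Fin d) ℂ := A - B with hXdef
  set Δ : Matrix (Fin d) (Fin d) ℂ := ρ - σ with hΔdef
  have hXherm : Xᴴ = X := by rw [hXdef, conjTranspose_sub, hAherm, hBherm]
  have hΔherm : Δ.IsHermitian := hρpsd.1.sub hσ.1.1
  set t : ℝ := ((X * X).trace).re with htdef
  set s : ℝ := ((Δᴴ * Δ).trace).re with hsdef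
  set D : ℝ := trDist ρ σ with hDdef
  set c : ℝ := Real.sqrt lmin with hcdef
  have hc : 0 < c := Real.sqrt_pos.mpr hlpos
  -- eigenvalues of Δ
  set e : Fin d → ℝ := hΔherm.eigenvalues with hedef
  have hΔspec : BuresAux.conjD hΔherm e = Δ := BuresAux.conjD_eigenvalues hΔherm
  have htraceΔ : Δ.trace = 0 := by rw [hΔdef, trace_sub, hρ.2, hσ.2, sub_self]
  have hsume : ∑ i, e i = 0 := by
    have h := congrArg Matrix.trace hΔspec
    rw [BuresAux.conjD_trace, htraceΔ] at h
    exact_mod_cast h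
  have hΔΔ : Δᴴ * Δ = BuresAux.conjD hΔherm (e * e) := by
    conv_lhs => rw [hΔherm.eq, ← hΔspec]
    rw [BuresAux.conjD_mul]
  have hs_sum : s = ∑ i, e i * e i := by
    rw [hsdef, hΔΔ, BuresAux.conjD_trace]
    simp
  -- trace norm of Δ
  have htn : traceNorm Δ = ∑ i, |e i| := by
    have habs : (fun i => |e i|) * (fun i => |e i|) = e * e := by
      funext i
      exact abs_mul_abs_self _
    have hR2 : (BuresAux.conjD hΔherm fun i => |e i|) ^ 2 = Δᴴ * Δ := by
      rw [pow_two, BuresAux.conjD_mul, habs]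
      exact hΔΔ.symm
    have hRpsd : (BuresAux.conjD hΔherm fun i => |e i|).PosSemidef :=
      BuresAux.conjD_posSemidef _ (fun i => abs_nonneg _)
    have heq := hRpsd.eq_sqrt_of_sq_eq (Matrix.posSemidef_conjTranspose_mul_self Δ) hR2
    rw [show traceNorm Δ = ((Matrix.posSemidef_conjTranspose_mul_self Δ).sqrt.trace).re from rfl,
      ← heq, BuresAux.conjD_trace]
    simp
  have hD_eq : D = (∑ i, |e i|) / 2 := by
    rw [hDdef]
    simp only [trDist]
    rw [← hΔdef, htn]
  have hD0 : 0 ≤ D := by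
    rw [hD_eq]
    positivity
  -- max eigenvalue bound and s ≤ 2 D²
  have hmax : ∀ k, |e k| ≤ (∑ i, |e i|) / 2 := by
    intro k
    have h1 : e k + ∑ i ∈ Finset.univ.erase k, e i = 0 := by
      rw [Finset.add_sum_erase Finset.univ e (Finset.mem_univ k)]
      exact hsume
    have h2 : |e k| ≤ ∑ i ∈ Finset.univ.erase k, |e i| := by
      have h3 : e k = -∑ i ∈ Finset.univ.erase k, e i := by linarith
      rw [h3, abs_neg]
      exact Finset.abs_sum_le_sum_abs _ _
    have h4 : |e k| + ∑ i ∈ Finset.univ.erase k, |e i| = ∑ i, |e i| :=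
      Finset.add_sum_erase Finset.univ (fun i => |e i|) (Finset.mem_univ k)
    linarith
  have hs_le : s ≤ 2 * D ^ 2 := by
    rw [hs_sum, hD_eq]
    calc (∑ i, e i * e i) ≤ ∑ i, |e i| * ((∑ j, |e j|) / 2) := by
          refine Finset.sum_le_sum fun i _ => ?_
          calc e i * e i = |e i| * |e i| := (abs_mul_abs_self _).symm
            _ ≤ |e i| * ((∑ j, |e j|) / 2) :=
                mul_le_mul_of_nonneg_left (hmax i) (abs_nonneg _)
      _ = (∑ i, |e i|) * ((∑ j, |e j|) / 2) := by rw [← Finset.sum_mul]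
      _ = 2 * ((∑ i, |e i|) / 2) ^ 2 := by ring
  -- fidelity = traceNorm (B * A)
  have hfid : fidelity ρ σ = traceNorm (B * A) := by
    have hm1 : msqrt ρ = A := by
      simp only [msqrt, dif_pos hρpsd]
      rfl
    have hBA : msqrt ρ * σ * msqrt ρ = (B * A)ᴴ * (B * A) := by
      rw [hm1, conjTranspose_mul, hAherm, hBherm, Matrix.mul_assoc A B,
        ← Matrix.mul_assoc B B A, hBB, Matrix.mul_assoc]
    have hm2 : msqrt ((B * A)ᴴ * (B * A))
        = (Matrix.posSemidef_conjTranspose_mul_self (B * A)).sqrt := by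
      simp only [msqrt, dif_pos (Matrix.posSemidef_conjTranspose_mul_self (B * A))]
      rfl
    simp only [fidelity, traceNorm]
    rw [hBA, hm2]
    rfl
  have hfid_ge : 1 - t / 2 ≤ fidelity ρ σ := by
    have h1 : (X * X).trace = 2 - 2 * (B * A).trace := by
      have hx : X * X = A * A - A * B - B * A + B * B := by
        rw [hXdef]
        noncomm_ring
      rw [hx, trace_add, trace_sub, trace_sub, hAA, hBB, hρ.2, hσ.2, trace_mul_comm A B]
      ring
    have h2 : ((B * A).trace).re = 1 - t / 2 := by
      have h1' := congrArg Complex.re h1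
      rw [Complex.sub_re, Complex.mul_re] at h1'
      simp only [Complex.re_ofNat, Complex.im_ofNat, zero_mul, sub_zero] at h1'
      rw [htdef]
      linarith
    calc 1 - t / 2 = ((B * A).trace).re := h2.symm
      _ ≤ traceNorm (B * A) := BuresAux.re_trace_le_traceNorm _
      _ = fidelity ρ σ := hfid.symm
  -- B ≥ c • 1
  have hBc : (B - (c : ℂ) • 1).PosSemidef := by
    have hsqrtB : B = BuresAux.conjD hσ.1.1 (Real.sqrt ∘ hσ.1.1.eigenvalues) :=
      BuresAux.conjD_sqrt hσ.1
    rw [hsqrtB, ← BuresAux.conjD_const hσ.1.1 c, BuresAux.conjD_sub]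
    refine BuresAux.conjD_posSemidef _ fun i => ?_
    have h1 : lmin ≤ hσ.1.1.eigenvalues i := by
      rw [hlmin]
      exact ciInf_le (Finite.bddBelow_range _) i
    have h2 : c ≤ Real.sqrt (hσ.1.1.eigenvalues i) := by
      rw [hcdef]
      exact Real.sqrt_le_sqrt h1
    simpa using h2
  -- Sylvester
  have hsylv : A * X + X * B = Δ := by
    rw [hXdef, hΔdef, ← hAA, ← hBB]
    noncomm_ring
  have hXAX : 0 ≤ ((X * (A * X)).trace).re := by
    have h : X * (A * X) = Xᴴ * A * X := by rw [hXherm, Matrix.mul_assoc]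
    rw [h]
    exact BuresAux.psd_trace_re_nonneg (hApsd.conjTranspose_mul_mul_same X)
  have hXBX : c * t ≤ ((X * B * X).trace).re := by
    have hdecomp : X * B * X = Xᴴ * (B - (c:ℂ) • 1) * X + (c:ℂ) • (X * X) :=
      BuresAux.sandwich_decomp X B hXherm c
    have hpsd2 : (Xᴴ * (B - (c:ℂ) • 1) * X).PosSemidef := hBc.conjTranspose_mul_mul_same X
    have hge := BuresAux.psd_trace_re_nonneg hpsd2
    rw [hdecomp, trace_add, Complex.add_re]
    have hre : (((c:ℂ) • (X * X).trace).re) = c * t := by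
      rw [htdef, smul_eq_mul, Complex.re_ofReal_mul]
    rw [trace_smul, hre]
    linarith
  have hCS : ((X * Δ).trace).re ≤ Real.sqrt t * Real.sqrt s := by
    have h := BuresAux.re_trace_mul_le_frob X Δ hXherm
    rw [hXherm] at h
    rw [htdef, hsdef]
    exact h
  have htXΔ : ((X * Δ).trace).re = ((X * (A * X)).trace).re + ((X * B * X).trace).re := by
    rw [← hsylv, Matrix.mul_add, trace_add, Complex.add_re]
    congr 1
    rw [trace_mul_comm X (X * B)]
  have ht0 : 0 ≤ t := by
    have h : X * X = Xᴴ * X := by rw [hXherm]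
    rw [htdef, h]
    exact BuresAux.psd_trace_re_nonneg (Matrix.posSemidef_conjTranspose_mul_self X)
  have hs0 : 0 ≤ s := by
    rw [hsdef]
    exact BuresAux.psd_trace_re_nonneg (Matrix.posSemidef_conjTranspose_mul_self Δ)
  have hct : c * t ≤ Real.sqrt t * Real.sqrt s := by
    calc c * t ≤ ((X * (A * X)).trace).re + ((X * B * X).trace).re := by linarith
      _ = ((X * Δ).trace).re := htXΔ.symm
      _ ≤ Real.sqrt t * Real.sqrt s := hCS
  have hlt : lmin * t ≤ s := by
    rcases eq_or_lt_of_le ht0 with h0 | h0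
    · rw [← h0, mul_zero]
      exact hs0
    · have hst : 0 < Real.sqrt t := Real.sqrt_pos.mpr h0
      have h1 : c * Real.sqrt t ≤ Real.sqrt s := by
        have h2 : (c * Real.sqrt t) * Real.sqrt t ≤ Real.sqrt s * Real.sqrt t := by
          rw [mul_assoc, Real.mul_self_sqrt ht0]
          calc c * t ≤ Real.sqrt t * Real.sqrt s := hct
            _ = Real.sqrt s * Real.sqrt t := mul_comm _ _
        exact le_of_mul_le_mul_right h2 hst
      have h3 : (c * Real.sqrt t) * (c * Real.sqrt t) ≤ Real.sqrt s * Real.sqrt s :=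
        mul_self_le_mul_self (by positivity) h1
      rw [Real.mul_self_sqrt hs0] at h3
      calc lmin * t = (c * Real.sqrt t) * (c * Real.sqrt t) := by
            rw [hcdef]
            rw [show Real.sqrt lmin * Real.sqrt t * (Real.sqrt lmin * Real.sqrt t)
              = (Real.sqrt lmin * Real.sqrt lmin) * (Real.sqrt t * Real.sqrt t) by ring,
              Real.mul_self_sqrt hlpos.le, Real.mul_self_sqrt ht0]
        _ ≤ s := h3
  have hmain : 1 - fidelity ρ σ ≤ D ^ 2 / lmin := by
    have h2 : t / 2 ≤ D ^ 2 / lmin := by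
      rw [div_le_div_iff₀ two_pos hlpos]
      nlinarith
    linarith
  have hfinal : Real.sqrt (1 - fidelity ρ σ) ≤ Real.sqrt (D ^ 2 / lmin) :=
    Real.sqrt_le_sqrt hmain
  have hsq : Real.sqrt (D ^ 2 / lmin) = D / Real.sqrt lmin := by
    rw [Real.sqrt_div (sq_nonneg D), Real.sqrt_sq hD0]
  simp only [buresDist]
  rw [hsq] at hfinal
  exact hfinal
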